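/- Let A be the adjacency matrix of a finite simple undirected graph and v : ℝ → ℝ^N a differentiable vector function with 0 ≤ v_j(t) ≤ 1 satisfying componentwise v_j'(t) ≤ β Σ_k a_{kj} v_k(t) - δ v_j(t). If β λ_1 < δ, where λ_1 is the largest eigenvalue of A, then ‖v(t)‖ → 0 as t → ∞. -/

import Mathlib

open Matrix Finset Filter Pointwise

private lemma rayleigh_bound {N : ℕ} (A : Matrix (Fin N) (Fin N) ℝ)
    (hAsym : A.IsSymm) (lam1 : ℝ)
    (hmax : ∀ μ ∈ spectrum ℝ A, μ ≤ lam1) (x : Fin N → ℝ) :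
    x ⬝ᵥ A *ᵥ x ≤ lam1 * (x ⬝ᵥ x) := by
  have hAherm : A.IsHermitian := by
    ext i j
    rw [Matrix.conjTranspose_apply, star_trivial, Matrix.IsSymm.apply hAsym i j]
  set B : Matrix (Fin N) (Fin N) ℝ := algebraMap ℝ _ lam1 - A with hB
  have hBherm : B.IsHermitian := by
    rw [hB]
    exact Matrix.IsHermitian.sub (Matrix.isHermitian_diagonal _) hAherm
  have hBspec : spectrum ℝ B = {lam1} - spectrum ℝ A :=
    (spectrum.singleton_sub_eq A lam1).symm
  have hpsd : B.PosSemidef := by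
    apply hBherm.posSemidef_iff_eigenvalues_nonneg.mpr
    intro i
    have h1 := hBherm.eigenvalues_mem_spectrum_real i
    rw [hBspec] at h1
    obtain ⟨a, ha, b, hb, hab⟩ := h1
    simp only [Set.mem_singleton_iff] at ha
    have hb' := hmax b hb
    have hab' : a - b = hBherm.eigenvalues i := hab
    rw [ha] at hab'
    linarith [show (0 : Fin N → ℝ) i = 0 from rfl]
  have h2 := hpsd.dotProduct_mulVec_nonneg x
  simp only [star_trivial] at h2
  have hexp : x ⬝ᵥ B *ᵥ x = lam1 * (x ⬝ᵥ x) - x ⬝ᵥ A *ᵥ x := by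
    rw [hB]
    simp only [Matrix.sub_mulVec, dotProduct_sub]
    congr 1
    rw [Algebra.algebraMap_eq_smul_one, Matrix.smul_mulVec, Matrix.one_mulVec,
      dotProduct_smul, smul_eq_mul]
  linarith [hexp ▸ h2]

/-- If `v : ℝ → ℝ^N` is differentiable with `0 ≤ v_j(t) ≤ 1` and satisfies
componentwise `v_j' ≤ β ∑_k a_{kj} v_k - δ v_j` for `t ≥ 0`, where `A` is the
adjacency matrix of a simple graph with largest eigenvalue `λ₁`, and
`β λ₁ < δ`, then `‖v(t)‖ → 0` as `t → ∞`. -/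
theorem subthreshold_extinction (N : ℕ)
    (A : Matrix (Fin N) (Fin N) ℝ)
    (hA01 : ∀ i j, A i j = 0 ∨ A i j = 1) (hAsym : A.IsSymm)
    (hAdiag : ∀ i, A i i = 0)
    (lam1 : ℝ) (hmem : lam1 ∈ spectrum ℝ A)
    (hmax : ∀ μ ∈ spectrum ℝ A, μ ≤ lam1)
    (β δ : ℝ) (hβ : 0 < β) (hδ : 0 < δ) (hsub : β * lam1 < δ)
    (v : ℝ → EuclideanSpace ℝ (Fin N))
    (hv : ∀ j, Differentiable ℝ (fun t => v t j))
    (hv01 : ∀ t j, 0 ≤ v t j ∧ v t j ≤ 1)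
    (hderiv : ∀ t, 0 ≤ t → ∀ j,
      deriv (fun s => v s j) t ≤ β * (∑ k, A k j * v t k) - δ * v t j) :
    Tendsto (fun t => ‖v t‖) atTop (nhds 0) := by
  set c : ℝ := 2 * (δ - β * lam1) with hc
  have hcpos : 0 < c := by rw [hc]; linarith
  set f : ℝ → ℝ := fun t => ∑ j, (v t j) ^ 2 with hf
  have hfnonneg : ∀ t, 0 ≤ f t := fun t =>
    Finset.sum_nonneg fun j _ => sq_nonneg _
  have hfderivAt : ∀ t, HasDerivAt f
      (∑ j, 2 * v t j * deriv (fun s => v s j) t) t := by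
    intro t
    apply HasDerivAt.fun_sum
    intro j _
    have h := ((hv j) t).hasDerivAt.fun_pow 2
    simpa [mul_comm, mul_assoc, mul_left_comm] using h
  have hfdiff : Differentiable ℝ f := fun t => (hfderivAt t).differentiableAt
  have hfderiv : ∀ t, deriv f t = ∑ j, 2 * v t j * deriv (fun s => v s j) t :=
    fun t => (hfderivAt t).deriv
  -- key differential inequality
  have hkey : ∀ t, 0 ≤ t → deriv f t ≤ -c * f t := by
    intro t ht
    rw [hfderiv t]
    have step1 : ∑ j, 2 * v t j * deriv (fun s => v s j) t ≤
        ∑ j, 2 * v t j * (β * (∑ k, A k j * v t k) - δ * v t j) := by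
      apply Finset.sum_le_sum
      intro j _
      apply mul_le_mul_of_nonneg_left (hderiv t ht j)
      have := (hv01 t j).1
      linarith
    have hray := rayleigh_bound A hAsym lam1 hmax (fun j => v t j)
    have hdot : (fun j => v t j) ⬝ᵥ A *ᵥ (fun j => v t j) =
        ∑ j, v t j * (∑ k, A j k * v t k) := by
      simp [dotProduct, Matrix.mulVec, dotProduct]
    have hdotself : (fun j => v t j) ⬝ᵥ (fun j => v t j) = f t := by
      simp [dotProduct, hf, sq]
    have step2 : ∑ j, 2 * v t j * (β * (∑ k, A k j * v t k) - δ * v t j) =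
        2 * β * (∑ j, v t j * (∑ k, A j k * v t k)) - 2 * δ * f t := by
      have hAkj : ∀ j, (∑ k, A k j * v t k) = ∑ k, A j k * v t k := by
        intro j
        apply Finset.sum_congr rfl
        intro k _
        rw [show A k j = A j k from (Matrix.IsSymm.apply hAsym j k)]
      rw [Finset.mul_sum, Finset.mul_sum, ← Finset.sum_sub_distrib]
      apply Finset.sum_congr rfl
      intro j _
      rw [hAkj j]
      ring
    refine le_trans step1 ?_
    rw [step2]
    have h3 : ∑ j, v t j * (∑ k, A j k * v t k) ≤ lam1 * f t := by
      rw [← hdot, ← hdotself]; exact hray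
    nlinarith [hfnonneg t, h3]
  -- Gronwall via g t = f t * exp (c * t)
  set g : ℝ → ℝ := fun t => f t * Real.exp (c * t) with hg
  have hgderivAt : ∀ t, HasDerivAt g
      (deriv f t * Real.exp (c * t) + f t * (c * Real.exp (c * t))) t := by
    intro t
    have h1 : HasDerivAt f (deriv f t) t := (hfderivAt t).congr_deriv (hfderiv t).symm
    have h2 : HasDerivAt (fun s => Real.exp (c * s)) (c * Real.exp (c * t)) t := by
      have := ((hasDerivAt_id t).const_mul c).exp
      simpa [mul_comm] using this
    exact h1.mul h2
  have hganti : AntitoneOn g (Set.Ici (0 : ℝ)) := by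
    apply antitoneOn_of_deriv_nonpos (convex_Ici 0)
    · exact (Continuous.continuousOn (by
        exact (hfdiff.continuous.mul ((Real.continuous_exp.comp (continuous_const.mul continuous_id))))))
    · intro t _
      exact ((hgderivAt t).differentiableAt).differentiableWithinAt
    · intro t ht
      rw [interior_Ici] at ht
      rw [(hgderivAt t).deriv]
      have h4 := hkey t (le_of_lt ht)
      have h5 : (0:ℝ) < Real.exp (c * t) := Real.exp_pos _
      nlinarith
  have hfb : ∀ t, 0 ≤ t → f t ≤ f 0 * Real.exp (-(c * t)) := by
    intro t ht
    have h6 : g t ≤ g 0 := hganti (Set.mem_Ici.mpr le_rfl) (Set.mem_Ici.mpr ht) ht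
    rw [hg] at h6
    simp only [mul_zero, Real.exp_zero, mul_one] at h6
    have h5 : (0:ℝ) < Real.exp (c * t) := Real.exp_pos _
    rw [Real.exp_neg, ← div_eq_mul_inv, le_div_iff₀ h5]
    exact h6
  -- squeeze
  have hflim : Tendsto f atTop (nhds 0) := by
    apply squeeze_zero' (Filter.eventually_atTop.mpr ⟨0, fun t _ => hfnonneg t⟩)
      (Filter.eventually_atTop.mpr ⟨0, fun t ht => hfb t ht⟩)
    have h7 : Tendsto (fun t : ℝ => c * t) atTop atTop :=
      Tendsto.const_mul_atTop hcpos tendsto_id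
    have h8 : Tendsto (fun t : ℝ => Real.exp (-(c * t))) atTop (nhds 0) :=
      Real.tendsto_exp_neg_atTop_nhds_zero.comp h7
    simpa using h8.const_mul (f 0)
  have hnorm : ∀ t, ‖v t‖ = Real.sqrt (f t) := by
    intro t
    rw [EuclideanSpace.norm_eq]
    congr 1
    apply Finset.sum_congr rfl
    intro j _
    rw [Real.norm_eq_abs, sq_abs]
  have : Tendsto (fun t => Real.sqrt (f t)) atTop (nhds 0) := by
    have := (Real.continuous_sqrt.tendsto 0).comp hflim
    simpa [Function.comp_def] using this
  simpa only [hnorm] using this
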